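/- Let V be a real inner product space, L > 0, and let ε₁, …, ε_r ∈ V (r ≥ 1) be pairwise orthogonal vectors each of norm 1/L. Let m₁, m₂, m ∈ ℝ, let k₁, …, k_r be integers, and set ω := Σ_{j=1}^r k_jε_j and 2ρ := m₁·Σ_{j=1}^r (1/2)ε_j + m₂·Σ_{j=1}^r ε_j + m·Σ_{1 ≤ j < k ≤ r} ((1/2)(ε_j + ε_k) + (1/2)(ε_j − ε_k)). Then 4π²·⟨ω + 2ρ, ω⟩ = (4π²/L²)·Σ_{j=1}^r k_j·(k_j + m₁/2 + m₂ + m·(r − j)). -/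

import Mathlib

open scoped RealInnerProductSpace

theorem stmt13 {V : Type*} [NormedAddCommGroup V] [InnerProductSpace ℝ V]
    {r : ℕ} (hr : 1 ≤ r) (L : ℝ) (hL : 0 < L)
    (ε : Fin r → V) (horth : ∀ i j, i ≠ j → ⟪ε i, ε j⟫ = 0)
    (hnorm : ∀ j, ‖ε j‖ = 1 / L)
    (m₁ m₂ m : ℝ) (k : Fin r → ℤ) (ω ρ2 : V)
    (hω : ω = ∑ j, (k j : ℝ) • ε j)
    (hρ : ρ2 = m₁ • (∑ j, (2⁻¹ : ℝ) • ε j) + m₂ • (∑ j, ε j) +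
      m • (∑ j : Fin r, ∑ l : Fin r, if j < l then
        ((2⁻¹ : ℝ) • (ε j + ε l) + (2⁻¹ : ℝ) • (ε j - ε l)) else 0)) :
    4 * Real.pi ^ 2 * ⟪ω + ρ2, ω⟫ =
      (4 * Real.pi ^ 2 / L ^ 2) *
        ∑ j : Fin r, (k j : ℝ) *
          ((k j : ℝ) + m₁ / 2 + m₂ + m * ((r : ℝ) - (((j : ℕ) : ℝ) + 1))) := by
  set c : Fin r → ℝ := fun j => (k j : ℝ) + m₁ / 2 + m₂ + m * ((r : ℝ) - (((j : ℕ) : ℝ) + 1))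
    with hc
  have hsum : ω + ρ2 = ∑ j, c j • ε j := by
    have hdouble : (∑ j : Fin r, ∑ l : Fin r, if j < l then
        ((2⁻¹ : ℝ) • (ε j + ε l) + (2⁻¹ : ℝ) • (ε j - ε l)) else 0)
        = ∑ j : Fin r, ((r : ℝ) - (((j : ℕ) : ℝ) + 1)) • ε j := by
      refine Finset.sum_congr rfl fun j _ => ?_
      have h1 : ∀ l : Fin r, ((2⁻¹ : ℝ) • (ε j + ε l) + (2⁻¹ : ℝ) • (ε j - ε l)) = ε j := by
        intro l; module
      have : (∑ l : Fin r, if j < l then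
          ((2⁻¹ : ℝ) • (ε j + ε l) + (2⁻¹ : ℝ) • (ε j - ε l)) else 0)
          = ∑ l : Fin r, if j < l then ε j else 0 := by
        refine Finset.sum_congr rfl fun l _ => ?_
        split_ifs with h
        · exact h1 l
        · rfl
      rw [this, ← Finset.sum_filter, Finset.filter_lt_eq_Ioi, Finset.sum_const, Fin.card_Ioi]
      have hj : (j : ℕ) + 1 ≤ r := j.2
      have : ((r - 1 - (j : ℕ) : ℕ) : ℝ) = (r : ℝ) - (((j : ℕ) : ℝ) + 1) := by
        rw [Nat.sub_sub]
        rw [Nat.cast_sub (by omega)]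
        push_cast; ring
      rw [← Nat.cast_smul_eq_nsmul ℝ, this]
    rw [hω, hρ, hdouble, Finset.smul_sum, Finset.smul_sum, Finset.smul_sum,
      ← Finset.sum_add_distrib, ← Finset.sum_add_distrib, ← Finset.sum_add_distrib]
    refine Finset.sum_congr rfl fun j _ => ?_
    rw [hc]
    module
  have hinner : ⟪ω + ρ2, ω⟫ = (∑ j, c j * (k j : ℝ)) / L ^ 2 := by
    rw [hsum, hω, sum_inner]
    rw [Finset.sum_div]
    refine Finset.sum_congr rfl fun j _ => ?_
    rw [inner_sum]
    rw [Finset.sum_eq_single j]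
    · rw [real_inner_smul_left, real_inner_smul_right, real_inner_self_eq_norm_sq, hnorm j]
      field_simp
    · intro b _ hb
      rw [real_inner_smul_left, real_inner_smul_right, horth j b (Ne.symm hb)]
      ring
    · intro h; exact absurd (Finset.mem_univ j) h
  have hS : (∑ j, c j * (k j : ℝ)) = ∑ j : Fin r, (k j : ℝ) *
      ((k j : ℝ) + m₁ / 2 + m₂ + m * ((r : ℝ) - (((j : ℕ) : ℝ) + 1))) :=
    Finset.sum_congr rfl fun j _ => by rw [hc]; ring
  rw [hinner, hS]; ring
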